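/- arXiv:1710.01348 — 2 statements merged into one kernel-verified Lean document; each statement's English description precedes it below -/
import Mathlib

section
/- For every natural number n and real number v, the Weierstrass-type integral \int_{-\infty}^{\infty} e^{-(x-y)^2} H_n(x) dx equals \sqrt{\pi} \, 2^n y^n, where H_n is the physicists' Hermite polynomial. -/
open MeasureTheory

def hermiteH : ℕ → ℝ → ℝ
  | 0, _ => 1
  | 1, x => 2 * x
  | n + 2, x => 2 * x * hermiteH (n + 1) x - 2 * ((n : ℝ) + 1) * hermiteH n x

open Polynomial Real Filter

/-- Uniform recurrence, valid also for `n = 0` (with `Nat` subtraction). -/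
lemma hermiteH_rec (n : ℕ) (x : ℝ) :
    hermiteH (n + 1) x = 2 * x * hermiteH n x - 2 * (n : ℝ) * hermiteH (n - 1) x := by
  cases n with
  | zero => simp [hermiteH]
  | succ m => simp only [hermiteH]; push_cast; ring

/-- `hermiteH n` is a polynomial function. -/
lemma hermiteH_poly : ∀ n : ℕ, ∃ p : Polynomial ℝ, ∀ x, hermiteH n x = p.eval x
  | 0 => ⟨1, by simp [hermiteH]⟩
  | 1 => ⟨C 2 * X, by simp [hermiteH]⟩
  | n + 2 => by
    obtain ⟨p, hp⟩ := hermiteH_poly (n + 1)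
    obtain ⟨q, hq⟩ := hermiteH_poly n
    exact ⟨C 2 * X * p - C (2 * ((n : ℝ) + 1)) * q, fun x => by
      simp [hermiteH, hp, hq]⟩

/-- Derivative of `hermiteH`, uniform form. -/
lemma hermiteH_hasDerivAt :
    ∀ (n : ℕ) (x : ℝ), HasDerivAt (hermiteH n) (2 * (n : ℝ) * hermiteH (n - 1) x) x
  | 0, x => by
    have h : hermiteH 0 = fun _ : ℝ => (1 : ℝ) := funext fun x => by simp [hermiteH]
    rw [h]
    simpa using (hasDerivAt_const x (1 : ℝ))
  | 1, x => by
    have h : hermiteH 1 = fun x : ℝ => 2 * x := funext fun x => by simp [hermiteH]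
    rw [h]
    have := (hasDerivAt_id x).const_mul (2 : ℝ)
    simpa [hermiteH] using this
  | n + 2, x => by
    have h : hermiteH (n + 2)
        = fun x : ℝ => 2 * x * hermiteH (n + 1) x - 2 * ((n : ℝ) + 1) * hermiteH n x :=
      funext fun x => by simp [hermiteH]
    rw [h]
    have h1 := hermiteH_hasDerivAt (n + 1) x
    have h2 := hermiteH_hasDerivAt n x
    have hx : HasDerivAt (fun x : ℝ => 2 * x) 2 x := by
      simpa using (hasDerivAt_id x).const_mul (2 : ℝ)
    have hprod : HasDerivAt (fun x : ℝ => 2 * x * hermiteH (n + 1) x)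
        (2 * hermiteH (n + 1) x + 2 * x * (2 * ((n : ℝ) + 1) * hermiteH n x)) x := by
      simpa using hx.fun_mul h1
    have hmul : HasDerivAt (fun x : ℝ => 2 * ((n : ℝ) + 1) * hermiteH n x)
        (2 * ((n : ℝ) + 1) * (2 * (n : ℝ) * hermiteH (n - 1) x)) x := h2.const_mul _
    have := hprod.fun_sub hmul
    refine this.congr_deriv ?_
    have e : n + 2 - 1 = n + 1 := rfl
    rw [e, hermiteH_rec n x]
    push_cast
    ring

/-- Moments of the Gaussian are integrable. -/
lemma integrable_pow_gauss (k : ℕ) :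
    Integrable (fun x : ℝ => x ^ k * Real.exp (-x ^ 2)) := by
  have h2k : Integrable (fun x : ℝ => x ^ (2 * k) * Real.exp (-x ^ 2)) := by
    have := integrable_rpow_mul_exp_neg_mul_sq (b := 1) one_pos
      (s := ((2 * k : ℕ) : ℝ)) (lt_of_lt_of_le neg_one_lt_zero (by positivity))
    refine this.congr (Eventually.of_forall fun x => ?_)
    simp only [Real.rpow_natCast]; norm_num
  have h0 : Integrable (fun x : ℝ => Real.exp (-x ^ 2)) := by
    have := integrable_exp_neg_mul_sq (b := (1 : ℝ)) one_pos
    simpa using this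
  refine (h2k.add h0).mono' ((by fun_prop : Continuous fun x : ℝ => x ^ k * Real.exp (-x ^ 2)).aestronglyMeasurable) ?_
  filter_upwards with x
  rw [Real.norm_eq_abs, abs_mul, abs_of_nonneg (Real.exp_pos _).le, abs_pow]
  have he : (0:ℝ) < Real.exp (-x ^ 2) := Real.exp_pos _
  have hbound : |x| ^ k ≤ x ^ (2 * k) + 1 := by
    have hx2 : x ^ (2 * k) = |x| ^ (2 * k) := by
      rw [← abs_pow]
      exact (abs_of_nonneg ((even_two_mul k).pow_nonneg x)).symm
    rw [hx2]
    rcases le_or_gt (|x|) 1 with h | h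
    · have : |x| ^ k ≤ 1 := pow_le_one₀ (abs_nonneg x) h
      nlinarith [pow_nonneg (abs_nonneg x) (2 * k)]
    · have : |x| ^ k ≤ |x| ^ (2 * k) :=
        pow_le_pow_right₀ h.le (by omega)
      linarith
  calc |x| ^ k * Real.exp (-x ^ 2)
      ≤ (x ^ (2 * k) + 1) * Real.exp (-x ^ 2) := by
        exact mul_le_mul_of_nonneg_right hbound he.le
    _ = x ^ (2 * k) * Real.exp (-x ^ 2) + Real.exp (-x ^ 2) := by ring

/-- Gaussian times polynomial (centered) is integrable. -/
lemma integrable_gauss_poly_centered (p : Polynomial ℝ) :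
    Integrable (fun x : ℝ => Real.exp (-x ^ 2) * p.eval x) := by
  induction p using Polynomial.induction_on' with
  | add p q hp hq =>
      have := hp.add hq
      refine this.congr (Eventually.of_forall fun x => by simp [Pi.add_apply]; ring)
  | monomial k a =>
      have := (integrable_pow_gauss k).const_mul a
      refine this.congr (Eventually.of_forall fun x => by simp [Polynomial.eval_monomial]; ring)

/-- Gaussian (shifted) times polynomial is integrable. -/
lemma integrable_gauss_poly (y : ℝ) (p : Polynomial ℝ) :
    Integrable (fun x : ℝ => Real.exp (-(x - y) ^ 2) * p.eval x) := by
  have h := (integrable_gauss_poly_centered (p.comp (X + C y))).comp_sub_right y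
  refine h.congr (Eventually.of_forall fun x => ?_)
  simp [Polynomial.eval_comp]

lemma integrable_gauss_hermite (y : ℝ) (n : ℕ) :
    Integrable (fun x : ℝ => Real.exp (-(x - y) ^ 2) * hermiteH n x) := by
  obtain ⟨p, hp⟩ := hermiteH_poly n
  have := integrable_gauss_poly y p
  exact this.congr (Eventually.of_forall fun x => by simp [hp])

lemma gauss_hasDerivAt (y x : ℝ) :
    HasDerivAt (fun x : ℝ => Real.exp (-(x - y) ^ 2))
      (-2 * (x - y) * Real.exp (-(x - y) ^ 2)) x := by
  have h1 : HasDerivAt (fun x : ℝ => -(x - y) ^ 2) (-2 * (x - y)) x := by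
    have := (((hasDerivAt_id x).sub_const y).fun_pow 2).fun_neg
    refine this.congr_deriv ?_
    simp
    try ring
  simpa [mul_comm] using h1.exp

/-- The key recurrence for the integral. -/
lemma weierstrass_step (n : ℕ) (y : ℝ) :
    (∫ x : ℝ, Real.exp (-(x - y) ^ 2) * hermiteH (n + 1) x)
      = 2 * y * ∫ x : ℝ, Real.exp (-(x - y) ^ 2) * hermiteH n x := by
  have hint_n := integrable_gauss_hermite y n
  have hint_n1 := integrable_gauss_hermite y (n + 1)
  have hderiv : ∀ x : ℝ, HasDerivAt (fun x => Real.exp (-(x - y) ^ 2) * hermiteH n x)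
      (-2 * (x - y) * Real.exp (-(x - y) ^ 2) * hermiteH n x
        + Real.exp (-(x - y) ^ 2) * (2 * (n : ℝ) * hermiteH (n - 1) x)) x := fun x => by
    have := (gauss_hasDerivAt y x).fun_mul (hermiteH_hasDerivAt n x)
    convert this using 1
  have hf'_eq : ∀ x : ℝ, (-2 * (x - y) * Real.exp (-(x - y) ^ 2) * hermiteH n x
        + Real.exp (-(x - y) ^ 2) * (2 * (n : ℝ) * hermiteH (n - 1) x))
      = -(Real.exp (-(x - y) ^ 2) * hermiteH (n + 1) x)
        + 2 * y * (Real.exp (-(x - y) ^ 2) * hermiteH n x) := fun x => by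
    rw [hermiteH_rec n x]; ring
  have hneg : Integrable (fun x : ℝ => -(Real.exp (-(x - y) ^ 2) * hermiteH (n + 1) x)) :=
    hint_n1.neg
  have hcm : Integrable (fun x : ℝ => 2 * y * (Real.exp (-(x - y) ^ 2) * hermiteH n x)) :=
    hint_n.const_mul _
  have hint_f' : Integrable (fun x : ℝ =>
      -2 * (x - y) * Real.exp (-(x - y) ^ 2) * hermiteH n x
        + Real.exp (-(x - y) ^ 2) * (2 * (n : ℝ) * hermiteH (n - 1) x)) :=
    (hneg.add hcm).congr (Eventually.of_forall fun x => (hf'_eq x).symm)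
  have hzero := integral_eq_zero_of_hasDerivAt_of_integrable hderiv hint_f' hint_n
  have h2 : ∫ x : ℝ, (-(Real.exp (-(x - y) ^ 2) * hermiteH (n + 1) x)
      + 2 * y * (Real.exp (-(x - y) ^ 2) * hermiteH n x)) = 0 :=
    (integral_congr_ae (Eventually.of_forall hf'_eq)).symm.trans hzero
  have h3 := integral_add hneg hcm
  rw [integral_neg, integral_const_mul] at h3
  rw [h3] at h2
  linarith

theorem weierstrass_hermite_integral (n : ℕ) (y : ℝ) :
    ∫ x : ℝ, Real.exp (-(x - y) ^ 2) * hermiteH n x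
      = Real.sqrt Real.pi * 2 ^ n * y ^ n := by
  induction n with
  | zero =>
      have h0 : (fun x : ℝ => Real.exp (-(x - y) ^ 2) * hermiteH 0 x)
          = fun x : ℝ => Real.exp (-(x - y) ^ 2) := funext fun x => by simp [hermiteH]
      rw [h0]
      have := integral_sub_right_eq_self (μ := volume)
        (fun a : ℝ => Real.exp (-a ^ 2)) y
      rw [this]
      have := integral_gaussian (1 : ℝ)
      simpa using this
  | succ m ih =>
      rw [weierstrass_step m y, ih]
      ring
end

section
/- (Mehler's formula at y = 0.) For real x and |\rho| < 1, \sum_{n=0}^{\infty} (\rho^n/(2^n n!)) H_n(x) H_n(0) = (1/\sqrt{1-\rho^2}) \exp( -x^2 \rho^2 / (1-\rho^2) ), where H_n is the physicists' Hermite polynomial and H_{2m}(0) = (-1)^m (2m)!/m!, H_{2m+1}(0) = 0. -/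
open MeasureTheory Filter Complex

noncomputable section MehlerAux

lemma hermiteH_zero (m : ℕ) :
    hermiteH (2 * m) 0 = (-1 : ℝ) ^ m * ((2 * m).factorial : ℝ) / (m.factorial : ℝ) ∧
      hermiteH (2 * m + 1) 0 = 0 := by
  induction m with
  | zero => simp [hermiteH]
  | succ m ih =>
    obtain ⟨h1, h2⟩ := ih
    constructor
    · have : 2 * (m + 1) = (2 * m) + 2 := by ring
      rw [this, hermiteH, h2, h1]
      have h2m1 : ((2 * m : ℕ) : ℝ) + 1 = ((2 * m + 1 : ℕ) : ℝ) := by push_cast; ring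
      rw [show (2*m+2).factorial = (2*m+2) * ((2*m+1) * (2*m).factorial) by
        rw [show 2*m+2 = (2*m+1)+1 by ring, Nat.factorial_succ, Nat.factorial_succ],
        show (m+1).factorial = (m+1) * m.factorial from Nat.factorial_succ m]
      push_cast
      have hm : (m.factorial : ℝ) ≠ 0 := Nat.cast_ne_zero.mpr m.factorial_ne_zero
      field_simp
      ring
    · have : 2 * (m + 1) + 1 = (2 * m + 1) + 2 := by ring
      rw [this, hermiteH, h2]
      simp

-- basic pow ≤ factorial * exp
lemma pow_le_fact_exp {a : ℝ} (ha : 0 ≤ a) (n : ℕ) : a ^ n ≤ n.factorial * Real.exp a := by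
  have h := Real.sum_le_exp_of_nonneg ha (n + 1)
  have h1 : a ^ n / n.factorial ≤ Real.exp a := by
    refine le_trans ?_ h
    exact Finset.single_le_sum (f := fun i => a ^ i / i.factorial)
      (fun i _ => by positivity) (Finset.self_mem_range_succ n)
  have hf : (0:ℝ) < n.factorial := by exact_mod_cast n.factorial_pos
  rw [div_le_iff₀ hf] at h1
  linarith [h1]

def fI (x : ℝ) (n : ℕ) (t : ℝ) : ℂ := ((x : ℂ) + t * I) ^ n * Complex.exp (-(t : ℂ) ^ 2)

lemma norm_fI_le (x : ℝ) (n : ℕ) (t : ℝ) :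
    ‖fI x n t‖ ≤ (n.factorial * Real.exp (|x| + 1/2)) * Real.exp (-(1/2) * t ^ 2) := by
  have hexp : ‖Complex.exp (-(t:ℂ)^2)‖ = Real.exp (-t^2) := by
    rw [Complex.norm_exp]
    congr 1
    simp [← Complex.ofReal_pow]
  have hz : ‖(x : ℂ) + t * I‖ ≤ |x| + |t| := by
    refine le_trans (norm_add_le _ _) ?_
    simp
  have hzn : ‖((x : ℂ) + t * I) ^ n‖ ≤ (|x| + |t|) ^ n := by
    rw [norm_pow]
    exact pow_le_pow_left₀ (norm_nonneg _) hz n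
  have h1 : (|x| + |t|) ^ n ≤ n.factorial * Real.exp (|x| + |t|) :=
    pow_le_fact_exp (by positivity) n
  have h2 : Real.exp (|x| + |t|) * Real.exp (-t^2) ≤
      Real.exp (|x| + 1/2) * Real.exp (-(1/2) * t^2) := by
    rw [← Real.exp_add, ← Real.exp_add]
    apply Real.exp_le_exp.mpr
    nlinarith [sq_nonneg (|t| - 1), _root_.sq_abs t]
  calc ‖fI x n t‖ = ‖((x : ℂ) + t * I) ^ n‖ * Real.exp (-t^2) := by
        rw [fI, norm_mul, hexp]
    _ ≤ (n.factorial * Real.exp (|x| + |t|)) * Real.exp (-t^2) := by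
        apply mul_le_mul_of_nonneg_right (le_trans hzn h1) (Real.exp_nonneg _)
    _ ≤ (n.factorial * Real.exp (|x| + 1/2)) * Real.exp (-(1/2) * t^2) := by
        rw [mul_assoc, mul_assoc]
        exact mul_le_mul_of_nonneg_left h2 (by positivity)

lemma continuous_fI (x : ℝ) (n : ℕ) : Continuous (fI x n) := by
  unfold fI
  fun_prop

lemma integrable_fI (x : ℝ) (n : ℕ) : Integrable (fI x n) := by
  refine Integrable.mono' ((integrable_exp_neg_mul_sq (by norm_num : (0:ℝ) < 1/2)).const_mul
    (n.factorial * Real.exp (|x| + 1/2))) (continuous_fI x n).aestronglyMeasurable ?_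
  exact ae_of_all _ (fun t => norm_fI_le x n t)

lemma tendsto_fI_top (x : ℝ) (n : ℕ) : Tendsto (fI x n) atTop (nhds 0) := by
  apply squeeze_zero_norm (norm_fI_le x n)
  have h : Tendsto (fun t : ℝ => -(1/2) * t ^ 2) atTop atBot := by
    apply Tendsto.const_mul_atTop_of_neg (by norm_num : (-(1/2):ℝ) < 0)
    exact tendsto_pow_atTop two_ne_zero
  have := (Real.tendsto_exp_atBot.comp h).const_mul (n.factorial * Real.exp (|x| + 1/2))
  simpa using this

lemma tendsto_fI_bot (x : ℝ) (n : ℕ) : Tendsto (fI x n) atBot (nhds 0) := by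
  apply squeeze_zero_norm (norm_fI_le x n)
  have h : Tendsto (fun t : ℝ => -(1/2) * t ^ 2) atBot atBot := by
    apply Tendsto.const_mul_atTop_of_neg (by norm_num : (-(1/2):ℝ) < 0)
    have habs : Tendsto (fun t : ℝ => |t|) atBot atTop := tendsto_abs_atBot_atTop
    have := (tendsto_pow_atTop (two_ne_zero)).comp habs
    refine this.congr (fun t => ?_)
    simp [_root_.sq_abs]
  have := (Real.tendsto_exp_atBot.comp h).const_mul (n.factorial * Real.exp (|x| + 1/2))
  simpa using this

def J (x : ℝ) (n : ℕ) : ℂ := ∫ t : ℝ, fI x n t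

lemma hasDerivAt_fI (x : ℝ) (n : ℕ) (t : ℝ) :
    HasDerivAt (fI x (n + 1))
      (((n : ℂ) + 1) * I * fI x n t + 2 * I * fI x (n + 2) t - 2 * I * x * fI x (n + 1) t) t := by
  have hbase : HasDerivAt (fun s : ℂ => (x : ℂ) + s * I) I (t : ℂ) := by
    simpa using ((hasDerivAt_id ((t : ℝ) : ℂ)).mul_const I).const_add (x : ℂ)
  have hp : HasDerivAt (fun s : ℂ => ((x : ℂ) + s * I) ^ (n + 1))
      (((n + 1 : ℕ) : ℂ) * ((x : ℂ) + t * I) ^ n * I) (t : ℂ) := by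
    simpa using hbase.fun_pow (n + 1)
  have hg : HasDerivAt (fun s : ℂ => Complex.exp (-s ^ 2))
      (Complex.exp (-(t : ℂ) ^ 2) * (-(2 * t))) (t : ℂ) := by
    have h2 : HasDerivAt (fun s : ℂ => -s ^ 2) (-(2 * (t : ℂ))) (t : ℂ) := by
      simpa using (hasDerivAt_pow 2 ((t : ℝ) : ℂ)).fun_neg
    simpa [mul_comm] using h2.cexp
  have hmul := (hp.fun_mul hg).comp_ofReal
  have : fI x (n + 1) = fun s : ℝ => ((x : ℂ) + s * I) ^ (n + 1) * Complex.exp (-(s : ℂ) ^ 2) := by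
    funext s; rfl
  rw [this]
  convert hmul using 1
  unfold fI
  set z : ℂ := (x : ℂ) + t * I with hz
  have ht : (t : ℂ) * I = z - x := by rw [hz]; ring
  have hIJ : I * I = -1 := Complex.I_mul_I
  push_cast
  rw [pow_succ z (n+1), pow_succ z n]
  set E : ℂ := Complex.exp (-(t : ℂ) ^ 2)
  linear_combination (2 * (t:ℂ) * z ^ n * z * E) * hIJ + (2 * z ^ n * z * E * I) * ht

lemma J_rec (x : ℝ) (n : ℕ) :
    J x (n + 2) = x * J x (n + 1) - ((n : ℂ) + 1) / 2 * J x n := by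
  have hint : Integrable (fun t : ℝ =>
      ((n : ℂ) + 1) * I * fI x n t + 2 * I * fI x (n + 2) t - 2 * I * x * fI x (n + 1) t) :=
    (((integrable_fI x n).const_mul _).add ((integrable_fI x (n+2)).const_mul _)).sub
      ((integrable_fI x (n+1)).const_mul _)
  have hzero : (∫ t : ℝ, (((n : ℂ) + 1) * I * fI x n t + 2 * I * fI x (n + 2) t
      - 2 * I * x * fI x (n + 1) t)) = 0 - 0 :=
    integral_of_hasDerivAt_of_tendsto (hasDerivAt_fI x n) hint
      (tendsto_fI_bot x (n+1)) (tendsto_fI_top x (n+1))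
  have hA : Integrable (fun t : ℝ => ((n : ℂ) + 1) * I * fI x n t + 2 * I * fI x (n + 2) t) :=
    ((integrable_fI x n).const_mul _).add ((integrable_fI x (n+2)).const_mul _)
  have hC : Integrable (fun t : ℝ => 2 * I * (x:ℂ) * fI x (n + 1) t) :=
    (integrable_fI x (n+1)).const_mul _
  have hA1 : Integrable (fun t : ℝ => ((n : ℂ) + 1) * I * fI x n t) :=
    (integrable_fI x n).const_mul _
  have hA2 : Integrable (fun t : ℝ => 2 * I * fI x (n + 2) t) :=
    (integrable_fI x (n+2)).const_mul _
  rw [integral_sub hA hC, integral_add hA1 hA2,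
    MeasureTheory.integral_const_mul, MeasureTheory.integral_const_mul, MeasureTheory.integral_const_mul] at hzero
  have hI : I ^ 2 = -1 := Complex.I_sq
  have hJ0 : (∫ t : ℝ, fI x n t) = J x n := rfl
  have hJ1 : (∫ t : ℝ, fI x (n+1) t) = J x (n+1) := rfl
  have hJ2 : (∫ t : ℝ, fI x (n+2) t) = J x (n+2) := rfl
  rw [hJ0, hJ1, hJ2] at hzero
  linear_combination (-(I)/2) * hzero +
    (J x (n+2) - (x : ℂ) * J x (n+1) + ((n : ℂ) + 1)/2 * J x n) * hI

lemma cexp_neg_sq_eq (t : ℝ) : Complex.exp (-(t : ℂ) ^ 2) = ((Real.exp (-t ^ 2) : ℝ) : ℂ) := by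
  rw [Complex.ofReal_exp]
  push_cast
  ring_nf

lemma J_zero (x : ℝ) : J x 0 = (Real.sqrt Real.pi : ℝ) := by
  unfold J fI
  simp only [pow_zero, one_mul]
  calc (∫ t : ℝ, Complex.exp (-(t:ℂ)^2)) = ∫ t : ℝ, ((Real.exp (-t^2) : ℝ) : ℂ) := by
        simp_rw [cexp_neg_sq_eq]
    _ = ((∫ t : ℝ, Real.exp (-t^2) : ℝ) : ℂ) := integral_ofReal
    _ = ((Real.sqrt Real.pi : ℝ) : ℂ) := by
        norm_cast
        have := integral_gaussian 1
        simpa using this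

lemma tendsto_negsq_atBot_top : Tendsto (fun s : ℝ => -s ^ 2) atTop atBot := by
  have := Tendsto.const_mul_atTop_of_neg (show (-1:ℝ) < 0 by norm_num)
    (tendsto_pow_atTop (two_ne_zero) : Tendsto (fun s : ℝ => s ^ 2) atTop atTop)
  simpa using this

lemma tendsto_negsq_atBot_bot : Tendsto (fun s : ℝ => -s ^ 2) atBot atBot := by
  have h : Tendsto (fun s : ℝ => s ^ 2) atBot atTop := by
    have := (tendsto_pow_atTop (two_ne_zero)).comp (tendsto_abs_atBot_atTop (G := ℝ))
    refine this.congr fun t => ?_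
    simp [_root_.sq_abs]
  have := Tendsto.const_mul_atTop_of_neg (show (-1:ℝ) < 0 by norm_num) h
  simpa using this

lemma integral_t_gauss : (∫ t : ℝ, t * Real.exp (-t ^ 2)) = 0 := by
  have hderiv : ∀ t : ℝ, HasDerivAt (fun s : ℝ => -Real.exp (-s ^ 2) / 2)
      (t * Real.exp (-t ^ 2)) t := by
    intro t
    have h1 : HasDerivAt (fun s : ℝ => -s ^ 2) (-(2 * t)) t := by
      simpa using (hasDerivAt_pow 2 t).fun_neg
    have h2 := (h1.exp).fun_neg.div_const 2
    refine h2.congr_deriv ?_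
    ring
  have hint : Integrable (fun t : ℝ => t * Real.exp (-t ^ 2)) := by
    have := integrable_mul_exp_neg_mul_sq (b := 1) one_pos
    simpa using this
  have htop : Tendsto (fun s : ℝ => -Real.exp (-s ^ 2) / 2) atTop (nhds 0) := by
    have := ((Real.tendsto_exp_atBot.comp tendsto_negsq_atBot_top).neg).div_const 2
    simpa using this
  have hbot : Tendsto (fun s : ℝ => -Real.exp (-s ^ 2) / 2) atBot (nhds 0) := by
    have := ((Real.tendsto_exp_atBot.comp tendsto_negsq_atBot_bot).neg).div_const 2
    simpa using this
  have := integral_of_hasDerivAt_of_tendsto hderiv hint hbot htop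
  simpa using this

lemma J_one (x : ℝ) : J x 1 = ((Real.sqrt Real.pi * x : ℝ) : ℂ) := by
  have hfun : ∀ t : ℝ, fI x 1 t =
      (x : ℂ) * Complex.exp (-(t : ℂ) ^ 2) + ((t * Real.exp (-t ^ 2) : ℝ) : ℂ) * I := by
    intro t
    rw [fI, pow_one, cexp_neg_sq_eq]
    push_cast
    ring
  have h1 : Integrable (fun t : ℝ => (x : ℂ) * Complex.exp (-(t : ℂ) ^ 2)) := by
    have := (integrable_fI x 0).const_mul (x : ℂ)
    refine this.congr (ae_of_all _ fun t => ?_)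
    simp [fI]
  have h2 : Integrable (fun t : ℝ => ((t * Real.exp (-t ^ 2) : ℝ) : ℂ) * I) := by
    have hr : Integrable (fun t : ℝ => t * Real.exp (-t ^ 2)) := by
      have := integrable_mul_exp_neg_mul_sq (b := 1) one_pos
      simpa using this
    exact (hr.ofReal (𝕜 := ℂ)).mul_const I
  calc J x 1 = ∫ t : ℝ, ((x : ℂ) * Complex.exp (-(t : ℂ) ^ 2)
        + ((t * Real.exp (-t ^ 2) : ℝ) : ℂ) * I) := by
        unfold J; exact integral_congr_ae (ae_of_all _ hfun)
    _ = (x : ℂ) * (∫ t : ℝ, Complex.exp (-(t : ℂ) ^ 2))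
        + (∫ t : ℝ, ((t * Real.exp (-t ^ 2) : ℝ) : ℂ)) * I := by
        rw [integral_add h1 h2, integral_const_mul, integral_mul_const]
    _ = (x : ℂ) * (J x 0) + (((∫ t : ℝ, t * Real.exp (-t ^ 2) : ℝ)) : ℂ) * I := by
        congr 1
        · congr 1
          unfold J fI
          simp
        · congr 1
          exact integral_ofReal
    _ = ((Real.sqrt Real.pi * x : ℝ) : ℂ) := by
        rw [J_zero, integral_t_gauss]
        push_cast
        ring

lemma J_eq (x : ℝ) : ∀ n : ℕ, J x n = ((Real.sqrt Real.pi * hermiteH n x / 2 ^ n : ℝ) : ℂ) := by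
  have key : ∀ n : ℕ, J x n = ((Real.sqrt Real.pi * hermiteH n x / 2 ^ n : ℝ) : ℂ) ∧
      J x (n + 1) = ((Real.sqrt Real.pi * hermiteH (n + 1) x / 2 ^ (n + 1) : ℝ) : ℂ) := by
    intro n
    induction n with
    | zero =>
      constructor
      · rw [J_zero]; norm_num [hermiteH]
      · rw [J_one]; norm_num [hermiteH]; push_cast; ring
    | succ n ih =>
      refine ⟨ih.2, ?_⟩
      rw [J_rec, ih.1, ih.2]
      rw [show hermiteH (n + 1 + 1) x = 2 * x * hermiteH (n + 1) x - 2 * ((n : ℝ) + 1) * hermiteH n x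
        from rfl]
      push_cast
      have h2 : ((2 : ℝ) ^ n) ≠ 0 := by positivity
      field_simp
      ring
  exact fun n => (key n).1

lemma norm_fI_eq (x : ℝ) (m : ℕ) (t : ℝ) :
    ‖fI x (2 * m) t‖ = (x ^ 2 + t ^ 2) ^ m * Real.exp (-t ^ 2) := by
  rw [fI, norm_mul, norm_pow]
  congr 1
  · rw [pow_mul]
    congr 1
    rw [Complex.sq_norm, Complex.normSq_add_mul_I]
  · rw [Complex.norm_exp]
    congr 1
    simp [← Complex.ofReal_pow]

lemma exchange (x ρ : ℝ) (hρ : |ρ| < 1) :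
    ∑' m : ℕ, ((-(ρ:ℂ)^2) ^ m / (m.factorial : ℂ)) * J x (2 * m)
      = ∫ t : ℝ, Complex.exp (((ρ:ℂ)^2 - 1) * t^2 + (-2 * I * ρ^2 * x) * t + (-(ρ:ℂ)^2 * x^2)) := by
  set θ : ℝ := (1 + ρ^2)/2 with hθ
  have hρ2 : ρ^2 < 1 := by
    have := abs_lt.mp hρ
    nlinarith
  have hθpos : 0 < θ := by positivity
  have hθ1 : θ < 1 := by rw [hθ]; linarith
  set r : ℝ := ρ^2 / θ with hr
  have hrnn : 0 ≤ r := by positivity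
  have hr1 : r < 1 := by
    rw [hr, div_lt_one hθpos, hθ]; linarith
  have hθr : θ * r = ρ^2 := by
    rw [hr]; field_simp
  set F : ℕ → ℝ → ℂ := fun m t => ((-(ρ:ℂ)^2) ^ m / (m.factorial : ℂ)) * fI x (2*m) t with hF
  have hFint : ∀ m, Integrable (F m) := fun m => (integrable_fI x (2*m)).const_mul _
  have hnormF : ∀ m t, ‖F m t‖ = (ρ^2)^m / m.factorial * ((x^2+t^2)^m * Real.exp (-t^2)) := by
    intro m t
    rw [hF]
    simp only [norm_mul]
    rw [norm_fI_eq x m t]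
    congr 1
    have hc : (-(ρ:ℂ)^2)^m/(m.factorial:ℂ) = (((-ρ^2)^m / m.factorial : ℝ) : ℂ) := by
      push_cast; ring
    rw [hc, Complex.norm_real, Real.norm_eq_abs, abs_div, _root_.abs_pow, abs_neg,
      _root_.abs_of_nonneg (sq_nonneg ρ), Nat.abs_cast]
  have hbound : ∀ m t, ‖F m t‖ ≤ r^m * (Real.exp (θ*x^2) * Real.exp (-(1-θ)*t^2)) := by
    intro m t
    rw [hnormF]
    have key : (ρ^2)^m * (x^2+t^2)^m / m.factorial ≤ r^m * Real.exp (θ*(x^2+t^2)) := by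
      have h1 : (θ*(x^2+t^2))^m ≤ m.factorial * Real.exp (θ*(x^2+t^2)) :=
        pow_le_fact_exp (by positivity) m
      have hfm : (0:ℝ) < m.factorial := by exact_mod_cast m.factorial_pos
      have h2 : (ρ^2)^m * (x^2+t^2)^m = r^m * (θ*(x^2+t^2))^m := by
        rw [← mul_pow, ← mul_pow, ← hθr]; ring_nf
      rw [h2, div_le_iff₀ hfm, mul_assoc]
      exact mul_le_mul_of_nonneg_left (by linarith [h1]) (by positivity)
    calc (ρ^2)^m / m.factorial * ((x^2+t^2)^m * Real.exp (-t^2))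
        = ((ρ^2)^m * (x^2+t^2)^m / m.factorial) * Real.exp (-t^2) := by ring
      _ ≤ (r^m * Real.exp (θ*(x^2+t^2))) * Real.exp (-t^2) :=
          mul_le_mul_of_nonneg_right key (Real.exp_nonneg _)
      _ = r^m * (Real.exp (θ*x^2) * Real.exp (-(1-θ)*t^2)) := by
          rw [mul_assoc, ← Real.exp_add, ← Real.exp_add]; ring_nf
  have hGint : Integrable (fun t : ℝ => Real.exp (θ*x^2) * Real.exp (-(1-θ)*t^2)) :=
    (integrable_exp_neg_mul_sq (by linarith : (0:ℝ) < 1-θ)).const_mul _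
  have hsum : Summable (fun m => ∫ t : ℝ, ‖F m t‖) := by
    refine Summable.of_nonneg_of_le (fun m => integral_nonneg fun t => norm_nonneg _)
      (fun m => ?_) (((summable_geometric_of_lt_one hrnn hr1).mul_right
        (∫ t : ℝ, Real.exp (θ*x^2) * Real.exp (-(1-θ)*t^2))))
    rw [← MeasureTheory.integral_const_mul]
    exact integral_mono ((hFint m).norm) (hGint.const_mul _) (fun t => hbound m t)
  have hexch := integral_tsum_of_summable_integral_norm hFint hsum
  have hptwise : ∀ t : ℝ, ∑' m : ℕ, F m t
      = Complex.exp (((ρ:ℂ)^2 - 1) * t^2 + (-2 * I * ρ^2 * x) * t + (-(ρ:ℂ)^2 * x^2)) := by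
    intro t
    set w : ℂ := -((ρ:ℂ) * ((x:ℂ) + t * I))^2 with hw
    have hexp : Complex.exp w = ∑' m : ℕ, w^m / (m.factorial : ℂ) := by
      rw [Complex.exp_eq_exp_ℂ, NormedSpace.exp_eq_tsum_div]
    have hFm : ∀ m, F m t = (w^m / (m.factorial : ℂ)) * Complex.exp (-(t:ℂ)^2) := by
      intro m
      rw [hF]
      simp only
      rw [fI, hw]
      rw [show (-((ρ:ℂ) * ((x:ℂ) + t * I))^2) = (-(ρ:ℂ)^2) * ((x:ℂ) + t * I)^2 by ring,
        mul_pow, pow_mul]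
      ring
    calc ∑' m : ℕ, F m t = (∑' m : ℕ, w^m / (m.factorial : ℂ)) * Complex.exp (-(t:ℂ)^2) := by
          rw [← tsum_mul_right]; exact tsum_congr fun m => hFm m
      _ = Complex.exp (w + -(t:ℂ)^2) := by rw [← hexp, Complex.exp_add]
      _ = Complex.exp (((ρ:ℂ)^2 - 1) * t^2 + (-2 * I * ρ^2 * x) * t + (-(ρ:ℂ)^2 * x^2)) := by
          congr 1
          rw [hw]
          have hI : I^2 = -1 := Complex.I_sq
          linear_combination (-(ρ:ℂ)^2 * (t:ℂ)^2) * hI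
  calc ∑' m : ℕ, ((-(ρ:ℂ)^2) ^ m / (m.factorial : ℂ)) * J x (2 * m)
      = ∑' m : ℕ, ∫ t : ℝ, F m t := by
        refine tsum_congr fun m => ?_
        rw [hF]
        simp only
        rw [J, MeasureTheory.integral_const_mul]
    _ = ∫ t : ℝ, ∑' m : ℕ, F m t := hexch
    _ = _ := integral_congr_ae (ae_of_all _ hptwise)

lemma gauss_eval (x ρ : ℝ) (hρ : |ρ| < 1) :
    (∫ t : ℝ, Complex.exp (((ρ:ℂ)^2 - 1) * t^2 + (-2 * I * ρ^2 * x) * t + (-(ρ:ℂ)^2 * x^2)))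
      = ((Real.sqrt (Real.pi/(1-ρ^2)) * Real.exp (-x^2*ρ^2/(1-ρ^2)) : ℝ) : ℂ) := by
  have hρ2 : ρ^2 < 1 := by
    have := abs_lt.mp hρ; nlinarith
  have hb : ((ρ:ℂ)^2 - 1).re < 0 := by
    have h : ((ρ:ℂ)^2 - 1) = ((ρ^2 - 1 : ℝ) : ℂ) := by push_cast; ring
    rw [h, Complex.ofReal_re]; linarith
  rw [integral_cexp_quadratic hb]
  have hne : ((ρ:ℂ)^2 - 1) ≠ 0 := by
    intro h
    rw [h] at hb
    simp at hb
  have h1 : (↑Real.pi / -((ρ:ℂ)^2 - 1)) = ((Real.pi/(1-ρ^2) : ℝ) : ℂ) := by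
    push_cast; ring
  have h3 : (-(ρ:ℂ)^2*(x:ℂ)^2) - (-2*I*(ρ:ℂ)^2*(x:ℂ))^2/(4*((ρ:ℂ)^2-1))
      = ((-x^2*ρ^2/(1-ρ^2) : ℝ) : ℂ) := by
    have hI : I^2 = -1 := Complex.I_sq
    have hne' : ((1:ℂ) - (ρ:ℂ)^2) ≠ 0 := by
      intro h; apply hne; linear_combination -h
    push_cast
    field_simp
    linear_combination (4*(ρ:ℂ)^4*(x:ℂ)^2*((ρ:ℂ)^2-1)) * hI
  rw [h1, h3, ← Complex.ofReal_exp]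
  have hpos : (0:ℝ) ≤ Real.pi/(1-ρ^2) := by
    have h1 := Real.pi_pos
    have h2 : (0:ℝ) < 1 - ρ^2 := by linarith
    positivity
  have h2 : ((Real.pi/(1-ρ^2) : ℝ) : ℂ) ^ ((1:ℂ)/2)
      = ((Real.sqrt (Real.pi/(1-ρ^2)) : ℝ) : ℂ) := by
    rw [show ((1:ℂ)/2) = (((1/2 : ℝ)):ℂ) by norm_num, ← Complex.ofReal_cpow hpos,
      ← Real.sqrt_eq_rpow]
  rw [h2, ← Complex.ofReal_mul]

end MehlerAux

theorem mehler_at_zero (x ρ : ℝ) (hρ : |ρ| < 1) :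
    (∑' n : ℕ, (ρ ^ n / (2 ^ n * (n.factorial : ℝ))) * hermiteH n x * hermiteH n 0
        = (1 / Real.sqrt (1 - ρ ^ 2)) * Real.exp (-x ^ 2 * ρ ^ 2 / (1 - ρ ^ 2))) ∧
    (∀ m : ℕ, hermiteH (2 * m) 0 = (-1 : ℝ) ^ m * ((2 * m).factorial : ℝ) / (m.factorial : ℝ) ∧
      hermiteH (2 * m + 1) 0 = 0) := by
  refine ⟨?_, hermiteH_zero⟩
  have hρ2 : ρ^2 < 1 := by
    have := abs_lt.mp hρ; nlinarith
  have h1m : (0:ℝ) < 1 - ρ^2 := by linarith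
  set g : ℕ → ℝ := fun n => ρ ^ n / (2 ^ n * (n.factorial : ℝ)) * hermiteH n x * hermiteH n 0
    with hg
  have hinj : Function.Injective (fun m : ℕ => 2 * m) := fun a b h => by
    have h' : 2 * a = 2 * b := h
    omega
  have hsupp : Function.support g ⊆ Set.range (fun m : ℕ => 2 * m) := by
    intro n hn
    by_contra hns
    apply hn
    have hodd : ∃ k, n = 2 * k + 1 := by
      rcases Nat.even_or_odd n with he | ho
      · obtain ⟨k, hk⟩ := he
        exact absurd ⟨k, show 2 * k = n by omega⟩ hns
      · obtain ⟨k, hk⟩ := ho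
        exact ⟨k, by omega⟩
    obtain ⟨k, rfl⟩ := hodd
    rw [hg]
    simp [(hermiteH_zero k).2]
  have hre : ∑' m : ℕ, g (2 * m) = ∑' n : ℕ, g n := hinj.tsum_eq hsupp
  have hterm : ∀ m : ℕ, g (2 * m) = (-ρ^2)^m / m.factorial * hermiteH (2*m) x / 4^m := by
    intro m
    rw [hg]
    simp only
    rw [(hermiteH_zero m).1, pow_mul, pow_mul, neg_pow (ρ^2)]
    have hfm : (((2*m).factorial : ℝ)) ≠ 0 := Nat.cast_ne_zero.mpr (2*m).factorial_ne_zero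
    have hm : ((m.factorial : ℝ)) ≠ 0 := Nat.cast_ne_zero.mpr m.factorial_ne_zero
    have h4 : ((2:ℝ)^2) = 4 := by norm_num
    rw [h4]
    field_simp
  have hcomplex := (exchange x ρ hρ).trans (gauss_eval x ρ hρ)
  have hterm2 : ∀ m : ℕ, ((-(ρ:ℂ)^2)^m / (m.factorial:ℂ)) * J x (2*m)
      = ((Real.sqrt Real.pi * ((-ρ^2)^m / m.factorial * hermiteH (2*m) x / 4^m) : ℝ) : ℂ) := by
    intro m
    rw [J_eq x (2*m)]
    push_cast
    rw [show ((2:ℂ))^(2*m) = 4^m by rw [pow_mul]; norm_num]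
    have h4 : ((4:ℂ)^m) ≠ 0 := pow_ne_zero _ (by norm_num)
    have hm : ((m.factorial:ℂ)) ≠ 0 := Nat.cast_ne_zero.mpr m.factorial_ne_zero
    field_simp
  rw [tsum_congr hterm2, ← Complex.ofReal_tsum] at hcomplex
  have hreal : ∑' m : ℕ, Real.sqrt Real.pi * ((-ρ^2)^m / m.factorial * hermiteH (2*m) x / 4^m)
      = Real.sqrt (Real.pi/(1-ρ^2)) * Real.exp (-x^2*ρ^2/(1-ρ^2)) := by
    exact_mod_cast hcomplex
  rw [tsum_mul_left] at hreal
  have hπ : Real.sqrt Real.pi ≠ 0 := by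
    have := Real.pi_pos
    positivity
  have hsqrt : Real.sqrt (Real.pi/(1-ρ^2)) = Real.sqrt Real.pi / Real.sqrt (1-ρ^2) :=
    Real.sqrt_div Real.pi_pos.le _
  have hA : (∑' m : ℕ, (-ρ^2)^m / m.factorial * hermiteH (2*m) x / 4^m)
      = 1 / Real.sqrt (1-ρ^2) * Real.exp (-x^2*ρ^2/(1-ρ^2)) := by
    apply mul_left_cancel₀ hπ
    rw [hreal, hsqrt]
    ring
  calc ∑' n : ℕ, g n = ∑' m : ℕ, g (2*m) := hre.symm
    _ = ∑' m : ℕ, (-ρ^2)^m / m.factorial * hermiteH (2*m) x / 4^m := tsum_congr hterm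
    _ = 1 / Real.sqrt (1-ρ^2) * Real.exp (-x^2*ρ^2/(1-ρ^2)) := hA
end
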